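/- Let n ≥ 4 be even. On ℝ²ⁿ with coordinates (X₁,...,Xₙ,u₁,...,uₙ) define I₁ = Σᵢ uᵢ, I₂ = Σ_{i<j} uᵢuⱼ − Σⱼ Xⱼ, and I₃ = Σ_{i₁<i₂<i₃} u_{i₁}u_{i₂}u_{i₃} − Σ_{1 ≤ i,j ≤ n, j ≢ i (mod n), j ≢ i−1 (mod n)} u_i X_j (X₀ := Xₙ), and let 𝕀₁₂₃ = (I₁,I₂,I₃) : ℝ²ⁿ → ℝ³. Then rank ∇𝕀₁₂₃(X,u) ≤ 2 if and only if there exist X₁, X₂, u₁, u₂ ∈ ℝ such that X_i = X₁ for all odd i, X_i = X₂ for all even i, u_i = u₁ for all odd i, and u_i = u₂ for all even i (with X₁, X₂, u₁, u₂ arbitrary). -/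

import Mathlib

/-- The conserved quantity `I₁` of the periodic Toda lattice. -/
noncomputable def todaPeriodicI1 (n : ℕ) (p : (Fin n → ℝ) × (Fin n → ℝ)) : ℝ :=
  ∑ i : Fin n, p.2 i

/-- The conserved quantity `I₂` of the periodic Toda lattice. -/
noncomputable def todaPeriodicI2 (n : ℕ) (p : (Fin n → ℝ) × (Fin n → ℝ)) : ℝ :=
  (∑ s ∈ Finset.powersetCard 2 (Finset.univ : Finset (Fin n)), ∏ i ∈ s, p.2 i)
    - ∑ j : Fin n, p.1 j

/-- The conserved quantity `I₃` of the periodic Toda lattice. -/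
noncomputable def todaPeriodicI3 (n : ℕ) [NeZero n]
    (p : (Fin n → ℝ) × (Fin n → ℝ)) : ℝ :=
  (∑ s ∈ Finset.powersetCard 3 (Finset.univ : Finset (Fin n)), ∏ i ∈ s, p.2 i)
    - ∑ i : Fin n, ∑ j : Fin n,
        if j ≠ i ∧ j ≠ i - 1 then p.2 i * p.1 j else 0

/-- The vectorial conserved quantity `𝕀₁₂₃ = (I₁, I₂, I₃)`. -/
noncomputable def todaPeriodicI123 (n : ℕ) [NeZero n]
    (p : (Fin n → ℝ) × (Fin n → ℝ)) : ℝ × ℝ × ℝ :=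
  (todaPeriodicI1 n p, todaPeriodicI2 n p, todaPeriodicI3 n p)

open Finset

variable {n : ℕ}

lemma toda_sum_swap {M : Type*} [AddCommMonoid M] (m : ℕ) (F : Fin n → Finset (Fin n) → M) :
    ∑ s ∈ (Finset.univ : Finset (Fin n)).powersetCard m, ∑ i ∈ s, F i s
      = ∑ i : Fin n, ∑ s ∈ ((Finset.univ : Finset (Fin n)).powersetCard m).filter
          (fun s => i ∈ s), F i s :=
  Finset.sum_comm' (by intro s i; simp [Finset.mem_filter, and_comm])

lemma toda_filter_erase (u : Fin n → ℝ) (k : Fin n) (m : ℕ) :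
    ∑ s ∈ ((Finset.univ : Finset (Fin n)).powersetCard (m+1)).filter (fun s => k ∈ s),
        ∏ j ∈ s.erase k, u j
      = ∑ t ∈ ((Finset.univ : Finset (Fin n)).erase k).powersetCard m, ∏ j ∈ t, u j := by
  refine Finset.sum_bij' (fun s _ => s.erase k) (fun t _ => insert k t) ?_ ?_ ?_ ?_ ?_
  · intro s hs
    rw [Finset.mem_filter, Finset.mem_powersetCard] at hs
    rw [Finset.mem_powersetCard]
    exact ⟨Finset.erase_subset_erase k (Finset.subset_univ s),
      by rw [Finset.card_erase_of_mem hs.2, hs.1.2]; omega⟩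
  · intro t ht
    rw [Finset.mem_powersetCard] at ht
    have hk : k ∉ t := fun h => Finset.notMem_erase k _ (ht.1 h)
    rw [Finset.mem_filter, Finset.mem_powersetCard]
    exact ⟨⟨Finset.subset_univ _, by rw [Finset.card_insert_of_notMem hk, ht.2]⟩,
      Finset.mem_insert_self k t⟩
  · intro s hs
    rw [Finset.mem_filter] at hs
    exact Finset.insert_erase hs.2
  · intro t ht
    rw [Finset.mem_powersetCard] at ht
    exact Finset.erase_insert (fun h => Finset.notMem_erase k _ (ht.1 h))
  · intro s _; rfl

lemma toda_esymm_step (u : Fin n → ℝ) (k : Fin n) (m : ℕ) :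
    ∑ t ∈ (Finset.univ : Finset (Fin n)).powersetCard (m+1), ∏ j ∈ t, u j
      = (∑ t ∈ ((Finset.univ : Finset (Fin n)).erase k).powersetCard (m+1), ∏ j ∈ t, u j)
        + u k * ∑ t ∈ ((Finset.univ : Finset (Fin n)).erase k).powersetCard m, ∏ j ∈ t, u j := by
  conv_lhs => rw [← Finset.insert_erase (Finset.mem_univ k)]
  rw [Finset.powersetCard_succ_insert (Finset.notMem_erase k _)]
  rw [Finset.sum_union]
  · congr 1
    rw [Finset.sum_image, Finset.mul_sum]
    · refine Finset.sum_congr rfl fun t ht => ?_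
      rw [Finset.mem_powersetCard] at ht
      exact Finset.prod_insert (fun h => Finset.notMem_erase k _ (ht.1 h))
    · intro t1 h1 t2 h2 h
      rw [Finset.mem_coe, Finset.mem_powersetCard] at h1 h2
      have k1 : k ∉ t1 := fun h => Finset.notMem_erase k _ (h1.1 h)
      have k2 : k ∉ t2 := fun h => Finset.notMem_erase k _ (h2.1 h)
      rw [← Finset.erase_insert k1, ← Finset.erase_insert k2, h]
  · rw [Finset.disjoint_left]
    intro s hs hs'
    rw [Finset.mem_powersetCard] at hs
    rcases Finset.mem_image.1 hs' with ⟨t, _, rfl⟩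
    exact Finset.notMem_erase k _ (hs.1 (Finset.mem_insert_self k t))

lemma toda_e1_erase (u : Fin n → ℝ) (k : Fin n) :
    ∑ t ∈ ((Finset.univ : Finset (Fin n)).erase k).powersetCard 1, ∏ j ∈ t, u j
      = (∑ i, u i) - u k := by
  rw [Finset.powersetCard_one, Finset.sum_map]
  simp only [Function.Embedding.coeFn_mk, Finset.prod_singleton]
  exact Finset.sum_erase_eq_sub (Finset.mem_univ k)

lemma toda_e2_erase (u : Fin n → ℝ) (k : Fin n) :
    ∑ t ∈ ((Finset.univ : Finset (Fin n)).erase k).powersetCard 2, ∏ j ∈ t, u j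
      = (∑ s ∈ Finset.powersetCard 2 (Finset.univ : Finset (Fin n)), ∏ i ∈ s, u i)
        - u k * ((∑ i, u i) - u k) := by
  have h := toda_esymm_step u k 1
  rw [toda_e1_erase] at h
  linarith

lemma toda_coeff2 (u : Fin n → ℝ) (k : Fin n) :
    ∑ s ∈ ((Finset.univ : Finset (Fin n)).powersetCard 2).filter (fun s => k ∈ s),
        ∏ j ∈ s.erase k, u j = (∑ i, u i) - u k := by
  rw [show (2:ℕ) = 1 + 1 from rfl, toda_filter_erase, toda_e1_erase]

lemma toda_coeff3 (u : Fin n → ℝ) (k : Fin n) :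
    ∑ s ∈ ((Finset.univ : Finset (Fin n)).powersetCard 3).filter (fun s => k ∈ s),
        ∏ j ∈ s.erase k, u j
      = (∑ s ∈ Finset.powersetCard 2 (Finset.univ : Finset (Fin n)), ∏ i ∈ s, u i)
        - u k * ((∑ i, u i) - u k) := by
  rw [show (3:ℕ) = 2 + 1 from rfl, toda_filter_erase, toda_e2_erase]

variable (n : ℕ)

noncomputable def todaPX (j : Fin n) : ((Fin n → ℝ) × (Fin n → ℝ)) →L[ℝ] ℝ :=
  (ContinuousLinearMap.proj j).comp (ContinuousLinearMap.fst ℝ (Fin n → ℝ) (Fin n → ℝ))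

noncomputable def todaPU (k : Fin n) : ((Fin n → ℝ) × (Fin n → ℝ)) →L[ℝ] ℝ :=
  (ContinuousLinearMap.proj k).comp (ContinuousLinearMap.snd ℝ (Fin n → ℝ) (Fin n → ℝ))

@[simp] lemma todaPX_apply (j : Fin n) (v : (Fin n → ℝ) × (Fin n → ℝ)) :
    todaPX n j v = v.1 j := rfl

@[simp] lemma todaPU_apply (k : Fin n) (v : (Fin n → ℝ) × (Fin n → ℝ)) :
    todaPU n k v = v.2 k := rfl

example (i : Fin n) (p : (Fin n → ℝ) × (Fin n → ℝ)) :
    HasFDerivAt (fun q : (Fin n → ℝ) × (Fin n → ℝ) => q.2 i) (todaPU n i) p :=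
  (todaPU n i).hasFDerivAt

lemma toda_sum_ite_ne_two {α : Type*} [Fintype α] [DecidableEq α] {a b : α} (hab : a ≠ b)
    (f : α → ℝ) :
    ∑ i, (if i ≠ a ∧ i ≠ b then f i else 0) = (∑ i, f i) - f a - f b := by
  have h : ∀ i : α, (if i ≠ a ∧ i ≠ b then f i else 0)
      = f i - (if i = a then f i else 0) - (if i = b then f i else 0) := by
    intro i
    rcases eq_or_ne i a with rfl | h1
    · simp [hab]
    · rcases eq_or_ne i b with rfl | h2
      · simp [h1]
      · simp [h1, h2]
  rw [Finset.sum_congr rfl (fun i _ => h i), Finset.sum_sub_distrib, Finset.sum_sub_distrib,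
    Finset.sum_ite_eq' Finset.univ a f, Finset.sum_ite_eq' Finset.univ b f]
  simp

lemma toda_fin_one_ne_zero (hn : 2 ≤ n) [NeZero n] : (1 : Fin n) ≠ 0 := by
  intro h
  have := congrArg Fin.val h
  rw [Fin.val_one' n, Nat.mod_eq_of_lt (by omega)] at this
  simp at this

lemma toda_fin_sub_one_ne (hn : 2 ≤ n) [NeZero n] (i : Fin n) : i - 1 ≠ i := by
  intro h
  have : (1 : Fin n) = 0 := by
    have := sub_eq_iff_eq_add.1 h
    have h2 := congrArg (fun z => z - i) this
    simpa [sub_self, add_sub_cancel_left] using h2.symm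
  exact toda_fin_one_ne_zero n hn this

lemma toda_fin_add_one_ne (hn : 2 ≤ n) [NeZero n] (j : Fin n) : j + 1 ≠ j := by
  intro h
  have h2 := congrArg (fun z => z - j) h
  simp only [add_sub_cancel_left, sub_self] at h2
  exact toda_fin_one_ne_zero n hn h2
noncomputable def todaL (n : ℕ) [NeZero n] (X u : Fin n → ℝ) :
    ((Fin n → ℝ) × (Fin n → ℝ)) →L[ℝ] ℝ × ℝ × ℝ :=
  (∑ k, todaPU n k).prod
    (((∑ k, ((∑ i, u i) - u k) • todaPU n k) - ∑ j, todaPX n j).prod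
      ((∑ k, ((∑ s ∈ Finset.powersetCard 2 (Finset.univ : Finset (Fin n)), ∏ i ∈ s, u i)
            - u k * ((∑ i, u i) - u k) - ((∑ j, X j) - X k - X (k - 1))) • todaPU n k)
        + ∑ j, (-((∑ i, u i) - u j - u (j + 1))) • todaPX n j))

lemma todaL_apply (n : ℕ) [NeZero n] (X u : Fin n → ℝ) (v : (Fin n → ℝ) × (Fin n → ℝ)) :
    todaL n X u v =
      (∑ k, v.2 k,
       (∑ k, ((∑ i, u i) - u k) * v.2 k) - ∑ j, v.1 j,
       (∑ k, ((∑ s ∈ Finset.powersetCard 2 (Finset.univ : Finset (Fin n)), ∏ i ∈ s, u i)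
            - u k * ((∑ i, u i) - u k) - ((∑ j, X j) - X k - X (k - 1))) * v.2 k)
         + ∑ j, (-((∑ i, u i) - u j - u (j + 1))) * v.1 j) := by
  simp [todaL, ContinuousLinearMap.prod_apply, ContinuousLinearMap.sum_apply,
    ContinuousLinearMap.sub_apply, ContinuousLinearMap.add_apply,
    ContinuousLinearMap.smul_apply, smul_eq_mul]

set_option maxHeartbeats 1000000 in
lemma toda_hasFDerivAt (n : ℕ) [NeZero n] (hn : 2 ≤ n) (X u : Fin n → ℝ) :
    HasFDerivAt (todaPeriodicI123 n) (todaL n X u) (X, u) := by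
  classical
  have hU : ∀ i : Fin n, HasFDerivAt (fun p : (Fin n → ℝ) × (Fin n → ℝ) => p.2 i)
      (todaPU n i) (X, u) := fun i => (todaPU n i).hasFDerivAt
  have hXp : ∀ j : Fin n, HasFDerivAt (fun p : (Fin n → ℝ) × (Fin n → ℝ) => p.1 j)
      (todaPX n j) (X, u) := fun j => (todaPX n j).hasFDerivAt
  have h1 : HasFDerivAt (todaPeriodicI1 n) (∑ k, todaPU n k) (X, u) :=
    HasFDerivAt.fun_sum (fun i _ => hU i)
  have hsym : ∀ m : ℕ, HasFDerivAt
      (fun p : (Fin n → ℝ) × (Fin n → ℝ) =>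
        ∑ s ∈ Finset.powersetCard m (Finset.univ : Finset (Fin n)), ∏ i ∈ s, p.2 i)
      (∑ s ∈ Finset.powersetCard m (Finset.univ : Finset (Fin n)),
        ∑ i ∈ s, (∏ j ∈ s.erase i, u j) • todaPU n i) (X, u) :=
    fun m => HasFDerivAt.fun_sum fun s _ => HasFDerivAt.finset_prod (fun i _ => hU i)
  have e2eq : (∑ s ∈ Finset.powersetCard 2 (Finset.univ : Finset (Fin n)),
        ∑ i ∈ s, (∏ j ∈ s.erase i, u j) • todaPU n i)
      = ∑ k, ((∑ i, u i) - u k) • todaPU n k := by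
    rw [toda_sum_swap]
    exact Finset.sum_congr rfl fun k _ => by rw [← Finset.sum_smul, toda_coeff2]
  have e3eq : (∑ s ∈ Finset.powersetCard 3 (Finset.univ : Finset (Fin n)),
        ∑ i ∈ s, (∏ j ∈ s.erase i, u j) • todaPU n i)
      = ∑ k, ((∑ s ∈ Finset.powersetCard 2 (Finset.univ : Finset (Fin n)), ∏ i ∈ s, u i)
          - u k * ((∑ i, u i) - u k)) • todaPU n k := by
    rw [toda_sum_swap]
    exact Finset.sum_congr rfl fun k _ => by rw [← Finset.sum_smul, toda_coeff3]
  have h2 : HasFDerivAt (todaPeriodicI2 n)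
      ((∑ k, ((∑ i, u i) - u k) • todaPU n k) - ∑ j, todaPX n j) (X, u) := by
    have := (hsym 2).sub (HasFDerivAt.fun_sum (u := Finset.univ) fun j _ => hXp j)
    rw [e2eq] at this
    exact this
  have hmul : ∀ i j : Fin n, HasFDerivAt
      (fun p : (Fin n → ℝ) × (Fin n → ℝ) => if j ≠ i ∧ j ≠ i - 1 then p.2 i * p.1 j else 0)
      (if j ≠ i ∧ j ≠ i - 1 then u i • todaPX n j + X j • todaPU n i else 0) (X, u) := by
    intro i j
    split_ifs
    · exact (hU i).mul (hXp j)
    · exact hasFDerivAt_const 0 _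
  have hI3b : HasFDerivAt
      (fun p : (Fin n → ℝ) × (Fin n → ℝ) =>
        ∑ i : Fin n, ∑ j : Fin n, if j ≠ i ∧ j ≠ i - 1 then p.2 i * p.1 j else 0)
      (∑ i : Fin n, ∑ j : Fin n,
        if j ≠ i ∧ j ≠ i - 1 then u i • todaPX n j + X j • todaPU n i else 0) (X, u) :=
    HasFDerivAt.fun_sum fun i _ => HasFDerivAt.fun_sum fun j _ => hmul i j
  -- now massage the derivative of the bilinear part
  have hsplit : (∑ i : Fin n, ∑ j : Fin n,
        if j ≠ i ∧ j ≠ i - 1 then u i • todaPX n j + X j • todaPU n i else 0)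
      = (∑ i : Fin n, ∑ j : Fin n, if j ≠ i ∧ j ≠ i - 1 then u i • todaPX n j else 0)
        + ∑ i : Fin n, ∑ j : Fin n, if j ≠ i ∧ j ≠ i - 1 then X j • todaPU n i else 0 := by
    rw [← Finset.sum_add_distrib]
    refine Finset.sum_congr rfl fun i _ => ?_
    rw [← Finset.sum_add_distrib]
    refine Finset.sum_congr rfl fun j _ => ?_
    split_ifs <;> simp
  have hB2 : (∑ i : Fin n, ∑ j : Fin n, if j ≠ i ∧ j ≠ i - 1 then X j • todaPU n i else 0)
      = ∑ i : Fin n, ((∑ j, X j) - X i - X (i - 1)) • todaPU n i := by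
    refine Finset.sum_congr rfl fun i _ => ?_
    rw [← toda_sum_ite_ne_two (Ne.symm (toda_fin_sub_one_ne n hn i)) X, Finset.sum_smul]
    exact Finset.sum_congr rfl fun j _ => by split_ifs <;> simp
  have hB1 : (∑ i : Fin n, ∑ j : Fin n, if j ≠ i ∧ j ≠ i - 1 then u i • todaPX n j else 0)
      = ∑ j : Fin n, ((∑ i, u i) - u j - u (j + 1)) • todaPX n j := by
    rw [Finset.sum_comm]
    refine Finset.sum_congr rfl fun j _ => ?_
    rw [← toda_sum_ite_ne_two (Ne.symm (toda_fin_add_one_ne n hn j)) u, Finset.sum_smul]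
    refine Finset.sum_congr rfl fun i _ => ?_
    have hiff : (j ≠ i ∧ j ≠ i - 1) ↔ (i ≠ j ∧ i ≠ j + 1) := by
      constructor
      · rintro ⟨ha, hb⟩
        exact ⟨Ne.symm ha, fun h => hb (by rw [h, add_sub_cancel_right])⟩
      · rintro ⟨ha, hb⟩
        exact ⟨Ne.symm ha, fun h => hb (by rw [h, sub_add_cancel])⟩
    rw [if_congr hiff rfl rfl]
    split_ifs <;> simp
  have h3 : HasFDerivAt (todaPeriodicI3 n)
      ((∑ k, ((∑ s ∈ Finset.powersetCard 2 (Finset.univ : Finset (Fin n)), ∏ i ∈ s, u i)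
            - u k * ((∑ i, u i) - u k) - ((∑ j, X j) - X k - X (k - 1))) • todaPU n k)
        + ∑ j, (-((∑ i, u i) - u j - u (j + 1))) • todaPX n j) (X, u) := by
    have hraw := (hsym 3).sub hI3b
    rw [e3eq, hsplit, hB1, hB2] at hraw
    have hre : (∑ k, ((∑ s ∈ Finset.powersetCard 2 (Finset.univ : Finset (Fin n)), ∏ i ∈ s, u i)
          - u k * ((∑ i, u i) - u k)) • todaPU n k)
        - ((∑ j : Fin n, ((∑ i, u i) - u j - u (j + 1)) • todaPX n j)
          + ∑ i : Fin n, ((∑ j, X j) - X i - X (i - 1)) • todaPU n i)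
        = (∑ k, ((∑ s ∈ Finset.powersetCard 2 (Finset.univ : Finset (Fin n)), ∏ i ∈ s, u i)
            - u k * ((∑ i, u i) - u k) - ((∑ j, X j) - X k - X (k - 1))) • todaPU n k)
          + ∑ j, (-((∑ i, u i) - u j - u (j + 1))) • todaPX n j := by
      rw [sub_add_eq_sub_sub_swap, ← Finset.sum_sub_distrib, sub_eq_add_neg,
        ← Finset.sum_neg_distrib]
      congr 1
      · exact Finset.sum_congr rfl fun k _ => (sub_smul _ _ _).symm
      · exact Finset.sum_congr rfl fun j _ => (neg_smul _ _).symm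
    rw [hre] at hraw
    exact hraw
  exact h1.prodMk (h2.prodMk h3)

/-- 3×3 determinant of elements of `ℝ × ℝ × ℝ`. -/
def todaDet3 (a b c : ℝ × ℝ × ℝ) : ℝ :=
  a.1 * (b.2.1 * c.2.2 - b.2.2 * c.2.1) - a.2.1 * (b.1 * c.2.2 - b.2.2 * c.1)
    + a.2.2 * (b.1 * c.2.1 - b.2.1 * c.1)

lemma toda_indep3 (a b c : ℝ × ℝ × ℝ) (h : todaDet3 a b c ≠ 0) :
    LinearIndependent ℝ ![a, b, c] := by
  rw [Fintype.linearIndependent_iff]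
  intro g hg
  rw [Fin.sum_univ_three] at hg
  simp only [Matrix.cons_val_zero, Matrix.cons_val_one, Matrix.head_cons,
    Matrix.cons_val_two, Matrix.tail_cons] at hg
  have e1 : g 0 * a.1 + g 1 * b.1 + g 2 * c.1 = 0 := by
    have := congrArg Prod.fst hg; simpa [smul_eq_mul] using this
  have e2 : g 0 * a.2.1 + g 1 * b.2.1 + g 2 * c.2.1 = 0 := by
    have := congrArg (fun z : ℝ × ℝ × ℝ => z.2.1) hg; simpa [smul_eq_mul] using this
  have e3 : g 0 * a.2.2 + g 1 * b.2.2 + g 2 * c.2.2 = 0 := by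
    have := congrArg (fun z : ℝ × ℝ × ℝ => z.2.2) hg; simpa [smul_eq_mul] using this
  intro i
  have h0 : g 0 * todaDet3 a b c = 0 := by
    unfold todaDet3
    linear_combination (b.2.1 * c.2.2 - b.2.2 * c.2.1) * e1
      - (b.1 * c.2.2 - b.2.2 * c.1) * e2 + (b.1 * c.2.1 - b.2.1 * c.1) * e3
  have h1 : g 1 * todaDet3 a b c = 0 := by
    unfold todaDet3
    linear_combination (-(a.2.1 * c.2.2 - a.2.2 * c.2.1)) * e1
      + (a.1 * c.2.2 - a.2.2 * c.1) * e2 - (a.1 * c.2.1 - a.2.1 * c.1) * e3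
  have h2 : g 2 * todaDet3 a b c = 0 := by
    unfold todaDet3
    linear_combination (a.2.1 * b.2.2 - a.2.2 * b.2.1) * e1
      - (a.1 * b.2.2 - a.2.2 * b.1) * e2 + (a.1 * b.2.1 - a.2.1 * b.1) * e3
  fin_cases i
  · exact (mul_eq_zero.1 h0).resolve_right h
  · exact (mul_eq_zero.1 h1).resolve_right h
  · exact (mul_eq_zero.1 h2).resolve_right h

lemma toda_det_zero_of_rank {E : Type*} [NormedAddCommGroup E] [NormedSpace ℝ E]
    (f : E →L[ℝ] ℝ × ℝ × ℝ)
    (hr : Module.finrank ℝ (LinearMap.range (f : E →ₗ[ℝ] ℝ × ℝ × ℝ)) ≤ 2)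
    (v1 v2 v3 : E) : todaDet3 (f v1) (f v2) (f v3) = 0 := by
  by_contra hd
  have hli := toda_indep3 _ _ _ hd
  set p := LinearMap.range (f : E →ₗ[ℝ] ℝ × ℝ × ℝ) with hp
  have hmem : ∀ i : Fin 3, (![f v1, f v2, f v3]) i ∈ p := by
    intro i; fin_cases i <;> exact ⟨_, rfl⟩
  let w : Fin 3 → p := fun i => ⟨_, hmem i⟩
  have hw : LinearIndependent ℝ w := by
    have hcomp : (p.subtype ∘ w) = ![f v1, f v2, f v3] := by
      funext i; rfl
    exact LinearIndependent.of_comp p.subtype (hcomp ▸ hli)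
  have := hw.fintype_card_le_finrank
  simp only [Fintype.card_fin] at this
  omega

lemma toda_val_add_one (n : ℕ) [NeZero n] (hn : 2 ≤ n) (heven : Even n) (k : Fin n) :
    ((k + 1 : Fin n)).val % 2 = (k.val + 1) % 2 := by
  have h1 : ((1 : Fin n)).val = 1 := by rw [Fin.val_one' n, Nat.mod_eq_of_lt (by omega)]
  have : ((k + 1 : Fin n)).val = (k.val + 1) % n := by rw [Fin.add_def, h1]
  rw [this]
  rcases Nat.lt_or_ge (k.val + 1) n with h | h
  · rw [Nat.mod_eq_of_lt h]
  · have hk := k.isLt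
    have heq : k.val + 1 = n := by omega
    rw [heq, Nat.mod_self]
    obtain ⟨m, hm⟩ := heven
    omega

lemma toda_val_sub_one (n : ℕ) [NeZero n] (hn : 2 ≤ n) (heven : Even n) (k : Fin n) :
    ((k - 1 : Fin n)).val % 2 = (k.val + 1) % 2 := by
  have h := toda_val_add_one n hn heven (k - 1)
  rw [sub_add_cancel] at h
  omega

lemma toda_alt_of_period_two (n : ℕ) [NeZero n] (hn : 2 ≤ n) (f : Fin n → ℝ)
    (h : ∀ j : Fin n, f (j + 1 + 1) = f j) :
    ∀ i : Fin n, f i = if i.val % 2 = 0 then f ⟨0, by omega⟩ else f ⟨1, by omega⟩ := by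
  have key : ∀ m : ℕ, ∀ hm : m < n,
      f ⟨m, hm⟩ = if m % 2 = 0 then f ⟨0, by omega⟩ else f ⟨1, by omega⟩ := by
    intro m
    induction m using Nat.strong_induction_on with
    | _ m ih =>
      intro hm
      match m with
      | 0 => simp
      | 1 => simp
      | (m + 2) =>
        have hm' : m < n := by omega
        have hstep : (⟨m, hm'⟩ + 1 + 1 : Fin n) = ⟨m + 2, hm⟩ := by
          have h1 : ((1 : Fin n)).val = 1 := by
            rw [Fin.val_one' n, Nat.mod_eq_of_lt (by omega)]
          apply Fin.ext
          simp [Fin.add_def, h1, Nat.mod_eq_of_lt (show m + 1 < n by omega),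
            Nat.mod_eq_of_lt (show m + 2 < n from hm)]
        have := h ⟨m, hm'⟩
        rw [hstep] at this
        rw [this, ih m (by omega) hm']
        have : (m + 2) % 2 = m % 2 := by omega
        rw [this]
  intro i
  have := key i.val i.isLt
  simpa using this

set_option maxHeartbeats 1000000 in
/-- For the periodic Toda lattice with an even number `n ≥ 4` of particles, the
Jacobian of `𝕀₁₂₃ = (I₁, I₂, I₃)` has rank at most `2` exactly at the
alternating configurations `(X₁,X₂,…,X₁,X₂,u₁,u₂,…,u₁,u₂)`. -/
theorem todaPeriodic_I123_rank_le_two_iff_even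
    (n : ℕ) [NeZero n] (hn : 4 ≤ n) (heven : Even n) (X u : Fin n → ℝ) :
    Module.finrank ℝ (LinearMap.range (fderiv ℝ (todaPeriodicI123 n) (X, u) : (Fin n → ℝ) × (Fin n → ℝ) →ₗ[ℝ] ℝ × ℝ × ℝ)) ≤ 2 ↔
      ∃ X₁ X₂ u₁ u₂ : ℝ,
        (∀ i : Fin n, X i = if i.val % 2 = 0 then X₁ else X₂) ∧
        (∀ i : Fin n, u i = if i.val % 2 = 0 then u₁ else u₂) := by
  classical
  have hn2 : 2 ≤ n := by omega
  have hfd : fderiv ℝ (todaPeriodicI123 n) (X, u) = todaL n X u :=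
    (toda_hasFDerivAt n hn2 X u).fderiv
  rw [hfd]
  set U' : ℝ := ∑ i, u i with hU'
  set Y' : ℝ := ∑ j, X j with hY'
  set V' : ℝ := ∑ s ∈ Finset.powersetCard 2 (Finset.univ : Finset (Fin n)), ∏ i ∈ s, u i
    with hV'
  have hEX : ∀ j : Fin n, todaL n X u (Pi.single j 1, 0)
      = (0, -1, -(U' - u j - u (j + 1))) := by
    intro j
    rw [todaL_apply]
    simp [Pi.single_apply, mul_ite, Finset.sum_ite_eq', hU', hY', hV']
  have hEU : ∀ k : Fin n, todaL n X u (0, Pi.single k 1)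
      = (1, U' - u k, V' - u k * (U' - u k) - (Y' - X k - X (k - 1))) := by
    intro k
    rw [todaL_apply]
    simp [Pi.single_apply, mul_ite, Finset.sum_ite_eq', hU', hY', hV']
  constructor
  · intro hr
    have hu2 : ∀ j : Fin n, u (j + 1 + 1) = u j := by
      intro j
      have hd := toda_det_zero_of_rank (todaL n X u) hr
        (Pi.single j 1, 0) (Pi.single (j + 1) 1, 0) (0, Pi.single 0 1)
      rw [show ((Pi.single (j+1) 1 : Fin n → ℝ), (0 : Fin n → ℝ))
        = ((Pi.single (j+1) 1, 0) : (Fin n → ℝ) × (Fin n → ℝ)) from rfl] at hd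
      rw [hEX j, hEX (j + 1), hEU 0] at hd
      unfold todaDet3 at hd
      simp only [] at hd
      linear_combination -hd
    have hX2 : ∀ k : Fin n, X (k + 1 + 1) = X k := by
      intro k
      have hd := toda_det_zero_of_rank (todaL n X u) hr
        (Pi.single (k + 1) 1, 0) (0, Pi.single (k + 1) 1) (0, Pi.single (k + 1 + 1) 1)
      rw [hEX (k + 1), hEU (k + 1), hEU (k + 1 + 1)] at hd
      rw [add_sub_cancel_right, add_sub_cancel_right] at hd
      unfold todaDet3 at hd
      simp only [] at hd
      linear_combination hd
    refine ⟨X ⟨0, by omega⟩, X ⟨1, by omega⟩, u ⟨0, by omega⟩, u ⟨1, by omega⟩, ?_, ?_⟩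
    · exact toda_alt_of_period_two n hn2 X hX2
    · exact toda_alt_of_period_two n hn2 u hu2
  · rintro ⟨X₁, X₂, u₁, u₂, hX, hu⟩
    have hA : ∀ j : Fin n, u j + u (j + 1) = u₁ + u₂ := by
      intro j
      have hp := toda_val_add_one n hn2 heven j
      rw [hu j, hu (j + 1), hp]
      rcases Nat.mod_two_eq_zero_or_one j.val with h0 | h1
      · rw [h0]; rw [show (j.val + 1) % 2 = 1 by omega]; simp
      · rw [h1]; rw [show (j.val + 1) % 2 = 0 by omega]; simp [add_comm]
    have hB : ∀ k : Fin n, X k + X (k - 1) = X₁ + X₂ := by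
      intro k
      have hp := toda_val_sub_one n hn2 heven k
      rw [hX k, hX (k - 1), hp]
      rcases Nat.mod_two_eq_zero_or_one k.val with h0 | h1
      · rw [h0]; rw [show (k.val + 1) % 2 = 1 by omega]; simp
      · rw [h1]; rw [show (k.val + 1) % 2 = 0 by omega]; simp [add_comm]
    have hC : ∀ k : Fin n, (u k - u₁) * (u k - u₂) = 0 := by
      intro k
      rw [hu k]
      rcases Nat.mod_two_eq_zero_or_one k.val with h0 | h1
      · rw [h0]; simp
      · rw [h1]; simp
    set β : ℝ := U' - (u₁ + u₂) with hβ
    set α : ℝ := V' - u₁ * u₂ - Y' + (X₁ + X₂) - U' * U' + (u₁ + u₂) * U' with hα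
    let φ : (ℝ × ℝ × ℝ) →ₗ[ℝ] ℝ :=
      { toFun := fun w => w.2.2 - α * w.1 - β * w.2.1
        map_add' := by intro w₁ w₂; simp; ring
        map_smul' := by intro c w; simp [smul_eq_mul]; ring }
    have hker : LinearMap.range (todaL n X u : (Fin n → ℝ) × (Fin n → ℝ) →ₗ[ℝ] ℝ × ℝ × ℝ) ≤ LinearMap.ker φ := by
      rintro w ⟨v, rfl⟩
      rw [LinearMap.mem_ker]
      show (todaL n X u v).2.2 - α * (todaL n X u v).1 - β * (todaL n X u v).2.1 = 0
      rw [todaL_apply]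
      simp only []
      have h3sum : (∑ k, (V' - u k * (U' - u k) - (Y' - X k - X (k - 1))) * v.2 k)
          = ∑ k, (α + β * (U' - u k)) * v.2 k := by
        refine Finset.sum_congr rfl fun k _ => ?_
        have hc : V' - u k * (U' - u k) - (Y' - X k - X (k - 1)) = α + β * (U' - u k) := by
          rw [hα, hβ]
          linear_combination hC k + hB k
        rw [hc]
      have h4sum : (∑ j, (-(U' - u j - u (j + 1))) * v.1 j) = ∑ j, (-β) * v.1 j := by
        refine Finset.sum_congr rfl fun j _ => ?_
        have hc : -(U' - u j - u (j + 1)) = -β := by rw [hβ]; linear_combination hA j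
        rw [hc]
      rw [h3sum, h4sum]
      have e1 : (∑ k, (α + β * (U' - u k)) * v.2 k)
          = α * (∑ k, v.2 k) + β * ∑ k, (U' - u k) * v.2 k := by
        rw [Finset.mul_sum, Finset.mul_sum, ← Finset.sum_add_distrib]
        exact Finset.sum_congr rfl fun k _ => by ring
      have e2 : (∑ j, (-β) * v.1 j) = -(β * ∑ j, v.1 j) := by
        rw [Finset.mul_sum]
        simp [neg_mul]
      rw [e1, e2]
      ring
    have hsurj : LinearMap.range φ = ⊤ := by
      rw [LinearMap.range_eq_top]
      intro r
      exact ⟨(0, 0, r), by show r - α * 0 - β * 0 = r; ring⟩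
    have hkerrank : Module.finrank ℝ (LinearMap.ker φ) = 2 := by
      have hadd := LinearMap.finrank_range_add_finrank_ker φ
      rw [hsurj, finrank_top] at hadd
      have h3 : Module.finrank ℝ (ℝ × ℝ × ℝ) = 3 := by
        simp [Module.finrank_prod, Module.finrank_self]
      have h1 : Module.finrank ℝ ℝ = 1 := Module.finrank_self ℝ
      omega
    calc Module.finrank ℝ (LinearMap.range (todaL n X u : (Fin n → ℝ) × (Fin n → ℝ) →ₗ[ℝ] ℝ × ℝ × ℝ))
        ≤ Module.finrank ℝ (LinearMap.ker φ) := Submodule.finrank_mono hker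
      _ = 2 := hkerrank
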